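/- Let S = S(k_0, k_1, …, k_m) be the LR-string R^{k_0} L^{k_1} R^{k_2} ⋯ ending in R^{k_m} if m is even and L^{k_m} if m is odd, with k_0 ≥ 0 and k_i ≥ 1 for 1 ≤ i ≤ m. Then N(S) = 2^{k_0+⋯+k_m+1} − 2^{k_1+⋯+k_m} + 2^{k_2+⋯+k_m} − ⋯ + 2^{k_m} − 2 if m is even, and N(S) = 2^{k_0+⋯+k_m+1} − 2^{k_1+⋯+k_m} + 2^{k_2+⋯+k_m} − ⋯ − 2^{k_m} − 1 if m is odd. -/

import Mathlib

open List

/-- `r`-value of an LR-string (`true` = R, `false` = L):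
`r(ε) = 1`, `r(SL) = r(S) - 2^(-|SL|)`, `r(SR) = r(S) + 2^(-|SR|)`. -/
def rval (S : List Bool) : ℚ :=
  1 + ∑ i ∈ Finset.range S.length,
      (if S.getD i false then ((2:ℚ)^(i+1))⁻¹ else -((2:ℚ)^(i+1))⁻¹)

/-- Generalized strings: LR-strings plus the formal symbols `R⁻¹ = inv true`
and `L⁻¹ = inv false`. -/
inductive Gen where
  | inv : Bool → Gen
  | str : List Bool → Gen
deriving DecidableEq

/-- Left parent: `P_L(ε) = R⁻¹`, `P_L(SL) = P_L(S)`, `P_L(SR) = S`. -/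
def PL (S : List Bool) : Gen :=
  match S.reverse.dropWhile (· = false) with
  | [] => Gen.inv true
  | _ :: t => Gen.str t.reverse

/-- Right parent: `P_R(ε) = L⁻¹`, `P_R(SL) = S`, `P_R(SR) = P_R(S)`. -/
def PR (S : List Bool) : Gen :=
  match S.reverse.dropWhile (· = true) with
  | [] => Gen.inv false
  | _ :: t => Gen.str t.reverse

/-- Extension of `r` to generalized strings: `r(R⁻¹) = 0`, `r(L⁻¹) = 2`. -/
def rg : Gen → ℚ
  | Gen.inv true => 0
  | Gen.inv false => 2
  | Gen.str S => rval S

/-- Length of a generalized string; the formal symbols have length `-1`. -/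
def glen : Gen → ℤ
  | Gen.inv _ => -1
  | Gen.str S => S.length

/-- Position function: `N(ε) = 0`, `N(SL) = 2N(S)+1`, `N(SR) = 2N(S)+2`. -/
def posN (S : List Bool) : ℕ :=
  ∑ i ∈ Finset.range S.length, (if S.getD i false then 2 else 1) * 2^(S.length - 1 - i)

/-- The alternating-block string `S(k₀,…,k_m) = R^{k₀} L^{k₁} R^{k₂} ⋯`. -/
def blockStr (ks : List ℕ) : List Bool :=
  (ks.zipIdx.map (fun p => List.replicate p.1 (decide (p.2 % 2 = 0)))).flatten

/-- Continued fraction `[q₀,…,q_m]`. -/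
def cf : List ℚ → ℚ
  | [] => 0
  | [q] => q
  | q :: qs => q + (cf qs)⁻¹

/-- Admissible continued-fraction index sequences: `[q₀]` with `q₀ ≥ 1`, or
`[q₀,…,q_m]` with `m ≥ 1`, intermediate `qᵢ ≥ 1`, and `q_m ≥ 2`. -/
def CFAdmissible (qs : List ℕ) : Prop :=
  qs ≠ [] ∧ (qs.length = 1 → 1 ≤ qs.getD 0 0) ∧
    (∀ i, 1 ≤ i → i + 1 < qs.length → 1 ≤ qs.getD i 0) ∧
    (2 ≤ qs.length → 2 ≤ qs.getLastD 0)

/-- The map `f([q₀,…,q_m]) = S(q₀,…,q_{m-1},q_m - 1)`. -/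
def cfToStr (qs : List ℕ) : List Bool :=
  blockStr (qs.dropLast ++ [qs.getLastD 0 - 1])

/-! ### Auxiliary development -/

def NZ (S : List Bool) : ℤ :=
  S.foldl (fun n b => 2 * n + (if b then 2 else 1)) 0

lemma NZ_nil : NZ [] = 0 := rfl

lemma NZ_snoc (S : List Bool) (b : Bool) :
    NZ (S ++ [b]) = 2 * NZ S + (if b then 2 else 1) := by
  simp [NZ, List.foldl_append]

lemma posN_cast (S : List Bool) : (posN S : ℤ) = NZ S := by
  induction S using List.reverseRecOn with
  | nil => simp [posN, NZ]
  | append_singleton S b ih =>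
    rw [NZ_snoc, ← ih]
    simp only [posN, List.length_append, List.length_singleton]
    rw [Finset.sum_range_succ]
    have h1 : ∀ i ∈ Finset.range S.length,
        ((if (S ++ [b]).getD i false then 2 else 1) * 2 ^ (S.length + 1 - 1 - i))
        = 2 * ((if S.getD i false then 2 else 1) * 2 ^ (S.length - 1 - i)) := by
      intro i hi
      rw [Finset.mem_range] at hi
      rw [List.getD_append _ _ _ _ hi]
      have h2 : S.length + 1 - 1 - i = (S.length - 1 - i) + 1 := by omega
      rw [h2, pow_succ]
      ring
    rw [Finset.sum_congr rfl h1, ← Finset.mul_sum]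
    have h3 : (S ++ [b]).getD S.length false = b := by
      rw [List.getD_append_right _ _ _ _ le_rfl]
      simp
    have h4 : S.length + 1 - 1 - S.length = 0 := by omega
    rw [h3, h4]
    push_cast
    ring

lemma NZ_append (S T : List Bool) :
    NZ (S ++ T) = 2 ^ T.length * NZ S + NZ T := by
  induction T using List.reverseRecOn with
  | nil => simp [NZ_nil]
  | append_singleton T b ih =>
    rw [← List.append_assoc, NZ_snoc, NZ_snoc, ih]
    simp only [List.length_append, List.length_singleton]
    rw [pow_succ]
    ring

lemma NZ_replicate_true (k : ℕ) : NZ (List.replicate k true) = 2 ^ (k + 1) - 2 := by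
  induction k with
  | zero => simp [NZ_nil]
  | succ k ih =>
    rw [List.replicate_succ', NZ_snoc, ih]
    simp [pow_succ]
    ring

lemma NZ_map_not (S : List Bool) :
    NZ (S.map not) = 3 * (2 ^ S.length - 1) - NZ S := by
  induction S using List.reverseRecOn with
  | nil => simp [NZ_nil]
  | append_singleton S b ih =>
    rw [List.map_append, NZ_snoc]
    simp only [List.map_cons, List.map_nil, NZ_snoc, ih,
      List.length_append, List.length_singleton]
    cases b <;> simp [pow_succ] <;> ring

lemma parity_flip (i : ℕ) :
    decide ((i + 1) % 2 = 0) = ! decide (i % 2 = 0) := by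
  rcases Nat.mod_two_eq_zero_or_one i with h | h <;> simp [Nat.add_mod, h]

lemma flatten_enumFrom_shift (ks : List ℕ) : ∀ n : ℕ,
    ((List.zipIdx ks (n + 1)).map
        (fun p => List.replicate p.1 (decide (p.2 % 2 = 0)))).flatten
      = (((List.zipIdx ks n).map
        (fun p => List.replicate p.1 (decide (p.2 % 2 = 0)))).flatten).map not := by
  induction ks with
  | nil => intro n; simp
  | cons k ks ih =>
    intro n
    simp only [List.zipIdx_cons, List.map_cons, List.flatten_cons, List.map_append]
    rw [ih (n + 1), parity_flip]
    congr 1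
    simp [List.map_replicate]

lemma blockStr_cons (k : ℕ) (ks : List ℕ) :
    blockStr (k :: ks) = List.replicate k true ++ (blockStr ks).map not := by
  have he : ∀ (l : List ℕ), l.zipIdx = List.zipIdx l 0 := by intro l; rfl
  simp only [blockStr, List.zipIdx_cons, List.map_cons, List.flatten_cons]
  rw [flatten_enumFrom_shift ks 0]
  norm_num

lemma blockStr_length (ks : List ℕ) : (blockStr ks).length = ks.sum := by
  induction ks with
  | nil => rfl
  | cons k ks ih => simp [blockStr_cons, ih]

lemma NZ_blockStr (ks : List ℕ) (hne : ks ≠ []) :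
    NZ (blockStr ks) = 2 ^ (ks.sum + 1) +
      (∑ i ∈ Finset.Icc 1 (ks.length - 1), (-1 : ℤ) ^ i * 2 ^ (ks.drop i).sum) -
      (if Even (ks.length - 1) then 2 else 1) := by
  induction ks with
  | nil => simp at hne
  | cons k ks ih =>
    cases ks with
    | nil =>
      simp [blockStr_cons, blockStr, NZ_replicate_true]
    | cons k' ks' =>
      set t : List ℕ := k' :: ks' with ht
      have htne : t ≠ [] := by simp [ht]
      rw [blockStr_cons, NZ_append, NZ_map_not, blockStr_length,
        List.length_map, blockStr_length, NZ_replicate_true, ih htne]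
      have hIcc : ∀ (f : ℕ → ℤ) (n : ℕ),
          ∑ i ∈ Finset.Icc 1 n, f i = ∑ j ∈ Finset.range n, f (1 + j) := by
        intro f n
        rw [← Finset.Ico_add_one_right_eq_Icc, Finset.sum_Ico_eq_sum_range]
        simp
      have hnewlen : (k :: t).length - 1 = (t.length - 1) + 1 := by simp [ht]
      rw [hIcc, hIcc _ ((k :: t).length - 1), hnewlen, Finset.sum_range_succ']
      have hdrop : ∀ j : ℕ, (k :: t).drop (1 + j) = t.drop j := by
        intro j; rw [add_comm]; exact List.drop_succ_cons
      have hsumeq : ∑ x ∈ Finset.range (t.length - 1),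
            (-1 : ℤ) ^ (1 + (x + 1)) * 2 ^ ((k :: t).drop (1 + (x + 1))).sum
          = -∑ x ∈ Finset.range (t.length - 1),
            (-1 : ℤ) ^ (1 + x) * 2 ^ (t.drop (1 + x)).sum := by
        rw [← Finset.sum_neg_distrib]
        apply Finset.sum_congr rfl
        intro j _
        rw [hdrop (j + 1), show 1 + (j + 1) = (1 + j) + 1 from by ring, pow_succ,
          show j + 1 = 1 + j from by ring]
        ring
      rw [hsumeq, hdrop 0, List.drop_zero,
        show (k :: t).sum = k + t.sum from by simp]
      rcases Nat.even_or_odd (t.length - 1) with hE | hO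
      · rw [if_pos hE, if_neg (by simp [Nat.even_add_one]; exact hE)]
        ring
      · have hnE : ¬ Even (t.length - 1) := Nat.not_even_iff_odd.mpr hO
        rw [if_neg hnE, if_pos (Nat.even_add_one.mpr hnE)]
        ring

/-- Theorem 2.4, Eq. (2.5b): a closed formula for `N(S(k₀,…,k_m))`:
`N(S) = 2^(k₀+⋯+k_m+1) - 2^(k₁+⋯+k_m) + 2^(k₂+⋯+k_m) - ⋯ ± 2^(k_m) - c`,
where `c = 2` if `m` is even and `c = 1` if `m` is odd. -/
theorem stmt10 (ks : List ℕ) (hne : ks ≠ [])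
    (hpos : ∀ i, 1 ≤ i → i < ks.length → 1 ≤ ks.getD i 0) :
    (posN (blockStr ks) : ℤ) =
      2 ^ (ks.sum + 1) +
        (∑ i ∈ Finset.Icc 1 (ks.length - 1), (-1 : ℤ) ^ i * 2 ^ (ks.drop i).sum) -
        (if Even (ks.length - 1) then 2 else 1) := by
  rw [posN_cast, NZ_blockStr ks hne]
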